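/- arXiv:1401.2290 — 3 statements merged into one kernel-verified Lean document; each statement's English description precedes it below -/
import Mathlib

section
/- For every k-dimensional simplicial complex X on a finite vertex set V, h'(X) ≤ h(X). -/
open Finset

namespace HigherCheeger

variable {V : Type*} [DecidableEq V] [Fintype V] [LinearOrder V]

/-- An abstract simplicial complex: a family of finite subsets of `V`
closed under taking subsets. -/
def IsComplex (X : Finset (Finset V)) : Prop :=
  ∀ σ ∈ X, ∀ τ ⊆ σ, τ ∈ X

/-- `X` is `k`-dimensional: every face has at most `k+1` vertices
and some face has exactly `k+1` vertices. -/
def IsDim (X : Finset (Finset V)) (k : ℕ) : Prop :=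
  (∀ σ ∈ X, σ.card ≤ k + 1) ∧ ∃ σ ∈ X, σ.card = k + 1

/-- The faces of `X` of cardinality `c` (i.e. of dimension `c - 1`). -/
def faces (X : Finset (Finset V)) (c : ℕ) : Finset (Finset V) :=
  X.filter fun σ => σ.card = c

/-- `X` has complete `(k-1)`-skeleton: every subset of `V` of size at most `k` is a face. -/
def CompleteSkeleton (X : Finset (Finset V)) (k : ℕ) : Prop :=
  ∀ σ : Finset V, σ.card ≤ k → σ ∈ X

/-- The `k`-dimensional completion `K(X)`. -/
def completion (X : Finset (Finset V)) (k : ℕ) : Finset (Finset V) :=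
  X ∪ (Finset.univ.filter fun τ : Finset V => τ.card = k + 1 ∧ ∀ v ∈ τ, τ.erase v ∈ X)

/-- The complete `k`-dimensional complex `K_n^k` on the vertex set `V`. -/
def completeComplex (V : Type*) [DecidableEq V] [Fintype V] (k : ℕ) : Finset (Finset V) :=
  Finset.univ.filter fun σ : Finset V => σ.card ≤ k + 1

/-- The oriented incidence number `[τ:σ]` (with respect to the linear order on `V`):
`(-1)^j` if `σ = τ \ {v_j}` where `v_j` is the `j`-th smallest vertex of `τ`, and `0` otherwise. -/
def incidence (τ σ : Finset V) : ℝ :=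
  if σ ⊆ τ ∧ σ.card + 1 = τ.card then
    ∑ v ∈ τ \ σ, (-1 : ℝ) ^ (τ.filter fun w => w < v).card
  else 0

/-- The real coboundary operator `δ` applied to a cochain living on the faces of
cardinality `c`; the result lives on faces of cardinality `c + 1`. -/
def delta (X : Finset (Finset V)) (c : ℕ) (f : Finset V → ℝ) : Finset V → ℝ :=
  fun τ => ∑ σ ∈ faces X c, incidence τ σ * f σ

/-- The real boundary operator `∂` (the adjoint of `δ`) applied to a cochain living
on the faces of cardinality `c`; the result lives on faces of cardinality `c - 1`. -/
def bdry (X : Finset (Finset V)) (c : ℕ) (f : Finset V → ℝ) : Finset V → ℝ :=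
  fun σ => ∑ τ ∈ faces X c, incidence τ σ * f τ

/-- The inner product of two cochains on the faces of cardinality `c`. -/
def inn (X : Finset (Finset V)) (c : ℕ) (f g : Finset V → ℝ) : ℝ :=
  ∑ σ ∈ faces X c, f σ * g σ

/-- The upper Laplacian `L^up_{k-1} = ∂_k δ_{k-1}` acting on `(k-1)`-cochains
(functions on faces of cardinality `k`). -/
def lapUp (X : Finset (Finset V)) (k : ℕ) (f : Finset V → ℝ) : Finset V → ℝ :=
  bdry X (k + 1) (delta X k f)

/-- The lower Laplacian `L^down_{k-1} = δ_{k-2} ∂_{k-1}` acting on `(k-1)`-cochains. -/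
def lapDown (X : Finset (Finset V)) (k : ℕ) (f : Finset V → ℝ) : Finset V → ℝ :=
  delta X (k - 1) (bdry X k f)

/-- `f ∈ Z_{k-1}(X;ℝ) = ker ∂_{k-1}`. -/
def IsCycle (X : Finset (Finset V)) (k : ℕ) (f : Finset V → ℝ) : Prop :=
  ∀ σ : Finset V, bdry X k f σ = 0

/-- `f ∈ B^{k-1}(X;ℝ) = im δ_{k-2}` (as a cochain, i.e. on the `(k-1)`-faces). -/
def IsCobdry (X : Finset (Finset V)) (k : ℕ) (f : Finset V → ℝ) : Prop :=
  ∃ g : Finset V → ℝ, ∀ σ ∈ faces X k, f σ = delta X (k - 1) g σ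

/-- The spectral gap `λ(X)`: the minimum of the Rayleigh quotient
`⟨L^up_{k-1}(X) f, f⟩ / ⟨f, f⟩` over nonzero `f ∈ Z_{k-1}(X;ℝ)`. -/
noncomputable def spectralGap (X : Finset (Finset V)) (k : ℕ) : ℝ :=
  sInf {r : ℝ | ∃ f : Finset V → ℝ, IsCycle X k f ∧ inn X k f f ≠ 0 ∧
    r = inn X k (lapUp X k f) f / inn X k f f}

/-- A partition of `V` into `m` (nonempty) parts. -/
def IsPartition {m : ℕ} (A : Fin m → Finset V) : Prop :=
  (∀ i, (A i).Nonempty) ∧ ∀ v : V, ∃! i, v ∈ A i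

/-- The linear order on `V` is adapted to the family of parts `A`. -/
def OrderAdapted {m : ℕ} (A : Fin m → Finset V) : Prop :=
  ∀ i j : Fin m, i < j → ∀ v ∈ A i, ∀ w ∈ A j, v < w

/-- `F(A_0,…,A_k)`: the `k`-faces of `X` with exactly one vertex in each part. -/
def Fset (X : Finset (Finset V)) (k : ℕ) (A : Fin (k + 1) → Finset V) : Finset (Finset V) :=
  (faces X (k + 1)).filter fun τ => ∀ i, (τ ∩ A i).card = 1

/-- `F^∂(A_0,…,A_k)`: the `(k+1)`-element members of `K(X)` with exactly one vertex
in each part. -/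
def Fpar (X : Finset (Finset V)) (k : ℕ) (A : Fin (k + 1) → Finset V) : Finset (Finset V) :=
  (faces (completion X k) (k + 1)).filter fun τ => ∀ i, (τ ∩ A i).card = 1

/-- The value `|V|·|F(A_0,…,A_k)| / |F^∂(A_0,…,A_k)|` of a partition
(`⊤` if the denominator is `0`). -/
noncomputable def cheegerVal (X : Finset (Finset V)) (k : ℕ) (A : Fin (k + 1) → Finset V) :
    EReal :=
  if (Fpar X k A).card = 0 then ⊤
  else (((Fintype.card V * (Fset X k A).card : ℝ) / ((Fpar X k A).card : ℝ) : ℝ) : EReal)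

/-- The Cheeger constant `h(X)`. -/
noncomputable def cheeger (X : Finset (Finset V)) (k : ℕ) : EReal :=
  sInf {r : EReal | ∃ A : Fin (k + 1) → Finset V, IsPartition A ∧ r = cheegerVal X k A}

/-- `d(σ)`: the number of members of `F^∂(A_0,…,A_k)` containing `σ`. -/
def degPar (X : Finset (Finset V)) (k : ℕ) (A : Fin (k + 1) → Finset V) (σ : Finset V) : ℕ :=
  ((Fpar X k A).filter fun τ => σ ⊆ τ).card

/-- `C(X)` (with respect to the partition `A`):
the maximum over `τ ∈ F^∂(A_0,…,A_k)` of `∑_{v ∈ τ} d(τ \ {v})`. -/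
def Cconst (X : Finset (Finset V)) (k : ℕ) (A : Fin (k + 1) → Finset V) : ℕ :=
  (Fpar X k A).sup fun τ => ∑ v ∈ τ, degPar X k A (τ.erase v)

/-- The cochain associated to a partition `A`: `σ ↦ (-1)^l·|A_l|` if `A_l` is the unique
part disjoint from `σ`, and `0` otherwise. -/
def assocCochain {k : ℕ} (A : Fin (k + 1) → Finset V) (σ : Finset V) : ℝ :=
  if (Finset.univ.filter fun l => σ ∩ A l = ∅).card = 1 then
    ∑ l ∈ Finset.univ.filter fun l => σ ∩ A l = ∅, (-1 : ℝ) ^ (l : ℕ) * ((A l).card : ℝ)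
  else 0

/-- The `Z₂`-coboundary: a `(c-1)`-cochain `f` is sent to
`τ ↦ ∑_{v ∈ τ} f (τ \ {v})`. -/
def deltaZ2 (f : Finset V → ZMod 2) (τ : Finset V) : ZMod 2 :=
  ∑ v ∈ τ, f (τ.erase v)

/-- The support of the `Z₂`-coboundary of `f` in `X`: the faces of `X` of cardinality
`k + 1` on which the `Z₂`-coboundary of `f` is nonzero.  Its cardinality is `|δ_X f|`. -/
def suppDelta (X : Finset (Finset V)) (k : ℕ) (f : Finset V → ZMod 2) : Finset (Finset V) :=
  (faces X (k + 1)).filter fun τ => deltaZ2 f τ ≠ 0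

/-- `F(A_0,…,A_{k-1})`: the `(k-1)`-faces of `X` with exactly one vertex in each of
the `k` parts. -/
def FsetLow (X : Finset (Finset V)) (k : ℕ) (A : Fin k → Finset V) : Finset (Finset V) :=
  (faces X k).filter fun σ => ∀ i, (σ ∩ A i).card = 1

/-- The Cheeger-type constant `h'(X)`. -/
noncomputable def cheeger' (X : Finset (Finset V)) (k : ℕ) : EReal :=
  sInf {r : EReal | ∃ (A : Fin k → Finset V) (f : Finset V → ZMod 2),
    IsPartition A ∧ (∀ σ, f σ ≠ 0 → σ ∈ FsetLow X k A) ∧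
    r = if (suppDelta (completion X k) k f).card = 0 then (⊤ : EReal)
        else (((Fintype.card V * (suppDelta X k f).card : ℝ) /
              ((suppDelta (completion X k) k f).card : ℝ) : ℝ) : EReal)}

/-- The Hamming norm of a `Z₂`-cochain on the faces of cardinality `c`. -/
def hamming (X : Finset (Finset V)) (c : ℕ) (f : Finset V → ZMod 2) : ℕ :=
  ((faces X c).filter fun σ => f σ ≠ 0).card

/-- `|[f]|`: the minimum Hamming norm of `f + δ_X g` over `g ∈ C^{k-2}(X;Z₂)`. -/
noncomputable def normClass (X : Finset (Finset V)) (k : ℕ) (f : Finset V → ZMod 2) : ℕ :=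
  sInf {m : ℕ | ∃ g : Finset V → ZMod 2, m = hamming X k fun σ => f σ + deltaZ2 g σ}

/-- The coboundary expansion `φ(X) = min_f |δ_X f| / |[f]|` (quotients with denominator
`0` are `∞`). -/
noncomputable def phi (X : Finset (Finset V)) (k : ℕ) : EReal :=
  sInf {r : EReal | ∃ f : Finset V → ZMod 2,
    r = if normClass X k f = 0 then (⊤ : EReal)
        else ((((suppDelta X k f).card : ℝ) / (normClass X k f : ℝ) : ℝ) : EReal)}

/-- `h̃(X) = min_f |V|·|δ_X f| / |δ_{K(X)} f|` (quotients with denominator `0` are `∞`). -/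
noncomputable def htilde (X : Finset (Finset V)) (k : ℕ) : EReal :=
  sInf {r : EReal | ∃ f : Finset V → ZMod 2,
    r = if (suppDelta (completion X k) k f).card = 0 then (⊤ : EReal)
        else (((Fintype.card V * (suppDelta X k f).card : ℝ) /
              ((suppDelta (completion X k) k f).card : ℝ) : ℝ) : EReal)}


section AuxProof

variable {V : Type*} [DecidableEq V] [Fintype V] [LinearOrder V]

/-- The `Z₂`-cochain associated to a partition into `k+1` parts. -/
def fA (X : Finset (Finset V)) (k : ℕ) (A : Fin (k + 1) → Finset V) : Finset V → ZMod 2 :=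
  fun σ => if σ ∈ X ∧ σ.card = k ∧ ∀ i : Fin k, (σ ∩ A i.castSucc).card = 1 then 1 else 0

/-- Merging the last two parts of a partition into `k+1` parts. -/
def Bp (k : ℕ) (A : Fin (k + 1) → Finset V) : Fin k → Finset V :=
  fun i => if (i : ℕ) = k - 1 then A i.castSucc ∪ A (Fin.last k) else A i.castSucc

lemma mem_Bp_iff {k : ℕ} (A : Fin (k + 1) → Finset V) (i : Fin k) (v : V) :
    v ∈ Bp k A i ↔ v ∈ A i.castSucc ∨ ((i : ℕ) = k - 1 ∧ v ∈ A (Fin.last k)) := by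
  unfold Bp
  split_ifs with h
  · simp [Finset.mem_union, h]
  · simp [h]

lemma Bp_partition {k : ℕ} (hk : 1 ≤ k) (A : Fin (k + 1) → Finset V)
    (hA : IsPartition A) : IsPartition (Bp k A) := by
  obtain ⟨hne, huniq⟩ := hA
  constructor
  · intro i
    obtain ⟨v, hv⟩ := hne i.castSucc
    exact ⟨v, (mem_Bp_iff A i v).2 (Or.inl hv)⟩
  · intro v
    obtain ⟨j, hj, hju⟩ := huniq v
    rcases Fin.eq_castSucc_or_eq_last j with ⟨j0, rfl⟩ | rfl
    · refine ⟨j0, (mem_Bp_iff A j0 v).2 (Or.inl hj), ?_⟩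
      intro i hi
      rcases (mem_Bp_iff A i v).1 hi with h | ⟨_, h⟩
      · exact Fin.castSucc_injective k (hju _ h)
      · exact absurd (hju _ h) (by
          intro hc
          exact absurd (congrArg Fin.val hc) (by simp [Fin.last]; omega))
    · refine ⟨⟨k - 1, by omega⟩, (mem_Bp_iff A _ v).2 (Or.inr ⟨rfl, hj⟩), ?_⟩
      intro i hi
      rcases (mem_Bp_iff A i v).1 hi with h | ⟨h, _⟩
      · exact absurd (hju _ h) (by
          intro hc
          exact absurd (congrArg Fin.val hc) (by simp [Fin.last]; omega))
      · exact Fin.ext h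

lemma card_inter_one_erase {t : Finset V} (ht : t.card = 1) (v : V) :
    (t.erase v).card = 1 ↔ v ∉ t := by
  constructor
  · intro h hv
    rw [Finset.card_erase_of_mem hv, ht] at h
    omega
  · intro hv
    rw [Finset.erase_eq_of_notMem hv, ht]

variable {k : ℕ} {A : Fin (k + 1) → Finset V}

lemma inter_part_eq_filter (p : V → Fin (k + 1))
    (hp : ∀ v i, v ∈ A i ↔ p v = i) (s : Finset V) (i : Fin (k + 1)) :
    s ∩ A i = s.filter fun v => p v = i := by
  ext w
  simp [Finset.mem_inter, Finset.mem_filter, hp w i, and_comm]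

lemma card_eq_sum_inter_parts (p : V → Fin (k + 1))
    (hp : ∀ v i, v ∈ A i ↔ p v = i) (s : Finset V) :
    s.card = ∑ i : Fin (k + 1), (s ∩ A i).card := by
  rw [Finset.card_eq_sum_card_fiberwise (f := p) (t := Finset.univ)
    (fun x _ => Finset.mem_univ _)]
  exact Finset.sum_congr rfl fun i _ => by rw [inter_part_eq_filter p hp s i]

/-- The key counting lemma: for a set `τ` of size `k+1` all of whose facets are faces of
`X`, the `Z₂`-coboundary of the associated cochain is nonzero on `τ` iff `τ` is
transversal to the partition. -/
lemma deltaZ2_fA_ne_zero_iff (p : V → Fin (k + 1))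
    (hp : ∀ v i, v ∈ A i ↔ p v = i) (X : Finset (Finset V)) (hk : 1 ≤ k)
    (τ : Finset V) (hcard : τ.card = k + 1) (her : ∀ v ∈ τ, τ.erase v ∈ X) :
    deltaZ2 (fA X k A) τ ≠ 0 ↔ ∀ i, (τ ∩ A i).card = 1 := by
  have hsum : ∀ s : Finset V, s.card = ∑ i : Fin (k + 1), (s ∩ A i).card :=
    card_eq_sum_inter_parts p hp
  -- rewrite deltaZ2 as a cardinality
  have hval : ∀ v ∈ τ, fA X k A (τ.erase v)
      = if (∀ i : Fin k, ((τ ∩ A i.castSucc).erase v).card = 1) then 1 else 0 := by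
    intro v hv
    unfold fA
    have h1 : τ.erase v ∈ X := her v hv
    have h2 : (τ.erase v).card = k := by
      rw [Finset.card_erase_of_mem hv, hcard]; omega
    have h3 : ∀ i : Fin (k + 1), (τ.erase v) ∩ A i = (τ ∩ A i).erase v := fun i =>
      Finset.erase_inter v τ (A i)
    congr 1
    simp only [h1, h2, h3, true_and, eq_iff_iff]
  have hdelta : deltaZ2 (fA X k A) τ
      = ((τ.filter fun v => ∀ i : Fin k, ((τ ∩ A i.castSucc).erase v).card = 1).card
        : ZMod 2) := by
    unfold deltaZ2
    rw [Finset.sum_congr rfl hval, Finset.sum_boole]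
  set S := τ.filter fun v => ∀ i : Fin k, ((τ ∩ A i.castSucc).erase v).card = 1 with hS
  rw [hdelta]
  by_cases htr : ∀ i, (τ ∩ A i).card = 1
  · -- transversal case : S = τ ∩ A (last)
    have hSeq : S = τ ∩ A (Fin.last k) := by
      ext w
      rw [hS, Finset.mem_filter, Finset.mem_inter]
      constructor
      · rintro ⟨hw, hcond⟩
        refine ⟨hw, (hp w _).2 ?_⟩
        rcases Fin.eq_castSucc_or_eq_last (p w) with ⟨j0, hj0⟩ | hl
        · exfalso
          have := (card_inter_one_erase (htr j0.castSucc) w).1 (hcond j0)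
          exact this (Finset.mem_inter.2 ⟨hw, (hp w _).2 hj0⟩)
        · exact hl
      · rintro ⟨hw, hwl⟩
        refine ⟨hw, fun i => (card_inter_one_erase (htr i.castSucc) w).2 ?_⟩
        intro hmem
        have h1 : p w = i.castSucc := (hp w _).1 (Finset.mem_inter.1 hmem).2
        have h2 : p w = Fin.last k := (hp w _).1 hwl
        have h3 : (i : ℕ) = k := by
          have h4 := congrArg Fin.val (h1.symm.trans h2)
          simpa [Fin.last] using h4
        omega
    rw [hSeq, htr (Fin.last k)]
    simp only [Nat.cast_one, ne_eq, one_ne_zero, not_false_eq_true, true_iff]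
    exact htr
  · -- non-transversal case : |S| is even
    refine iff_of_false (fun hne => hne ?_) htr
    rcases Finset.eq_empty_or_nonempty S with hSe | ⟨v, hvS⟩
    · rw [hSe]; simp
    have hv : v ∈ τ := (Finset.mem_filter.1 hvS).1
    have hv2 : ∀ i : Fin k, ((τ ∩ A i.castSucc).erase v).card = 1 :=
      (Finset.mem_filter.1 hvS).2
    have hvp : v ∈ A (p v) := (hp v _).2 rfl
    -- the part of v is not the last one
    have hjne : p v ≠ Fin.last k := by
      intro hl
      apply htr
      have hci : ∀ i : Fin k, (τ ∩ A i.castSucc).card = 1 := by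
        intro i
        have hvnot : v ∉ τ ∩ A i.castSucc := by
          intro hmem
          have h1 := (hp v _).1 (Finset.mem_inter.1 hmem).2
          rw [hl] at h1
          exact absurd (congrArg Fin.val h1) (by simp [Fin.last]; omega)
        rw [← Finset.erase_eq_of_notMem hvnot]
        exact hv2 i
      have hlast : (τ ∩ A (Fin.last k)).card = 1 := by
        have := hsum τ
        rw [hcard, Fin.sum_univ_castSucc] at this
        have hsum1 : ∑ i : Fin k, (τ ∩ A i.castSucc).card = k := by
          rw [Finset.sum_congr rfl fun i _ => hci i]; simp
        omega
      intro i
      rcases Fin.eq_castSucc_or_eq_last i with ⟨j0, rfl⟩ | rfl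
      · exact hci j0
      · exact hlast
    obtain ⟨j', hj'⟩ : ∃ j' : Fin k, j'.castSucc = p v :=
      ⟨(p v).castPred hjne, Fin.castSucc_castPred _ hjne⟩
    -- the part of v meets τ in exactly 2 vertices
    have hcj : (τ ∩ A (p v)).card = 2 := by
      have hmem : v ∈ τ ∩ A (p v) := Finset.mem_inter.2 ⟨hv, hvp⟩
      have := hv2 j'
      rw [hj'] at this
      rw [Finset.card_erase_of_mem hmem] at this
      omega
    -- all other non-last parts meet τ in exactly 1 vertex
    have hcother : ∀ i : Fin k, i.castSucc ≠ p v → (τ ∩ A i.castSucc).card = 1 := by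
      intro i hi
      have hvnot : v ∉ τ ∩ A i.castSucc := fun hmem =>
        hi ((hp v _).1 (Finset.mem_inter.1 hmem).2).symm
      rw [← Finset.erase_eq_of_notMem hvnot]
      exact hv2 i
    -- the last part misses τ
    have hclast : (τ ∩ A (Fin.last k)).card = 0 := by
      have := hsum τ
      rw [hcard, Fin.sum_univ_castSucc] at this
      have hsum1 : ∑ i : Fin k, (τ ∩ A i.castSucc).card = k + 1 := by
        rw [← Finset.add_sum_erase _ _ (Finset.mem_univ j')]
        have : ∑ i ∈ Finset.univ.erase j', (τ ∩ A i.castSucc).card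
            = ∑ i ∈ Finset.univ.erase j', 1 := by
          refine Finset.sum_congr rfl fun i hi => ?_
          refine hcother i fun hc => ?_
          exact (Finset.mem_erase.1 hi).1 (Fin.castSucc_injective k (hc.trans hj'.symm))
        rw [this, Finset.sum_const, smul_eq_mul, mul_one, hj', hcj,
          Finset.card_erase_of_mem (Finset.mem_univ j'), Finset.card_univ,
          Fintype.card_fin]
        omega
      omega
    -- S equals τ ∩ A (p v), which has 2 elements
    have hSeq : S = τ ∩ A (p v) := by
      ext w
      rw [hS, Finset.mem_filter, Finset.mem_inter]
      constructor
      · rintro ⟨hw, hcond⟩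
        refine ⟨hw, ?_⟩
        have hwne : p w ≠ Fin.last k := by
          intro hl
          have : w ∈ τ ∩ A (Fin.last k) :=
            Finset.mem_inter.2 ⟨hw, (hp w _).2 hl⟩
          rw [Finset.card_eq_zero] at hclast
          rw [hclast] at this
          exact absurd this (Finset.notMem_empty w)
        obtain ⟨m', hm'⟩ : ∃ m' : Fin k, m'.castSucc = p w :=
          ⟨(p w).castPred hwne, Fin.castSucc_castPred _ hwne⟩
        by_cases hmj : p w = p v
        · exact (hp w _).2 hmj
        · exfalso
          have h1 : (τ ∩ A m'.castSucc).card = 1 := hcother m' (hm'.symm ▸ hmj)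
          have hwm : w ∈ τ ∩ A m'.castSucc :=
            Finset.mem_inter.2 ⟨hw, (hp w _).2 hm'.symm⟩
          have := hcond m'
          rw [Finset.card_erase_of_mem hwm, h1] at this
          omega
      · rintro ⟨hw, hwp⟩
        refine ⟨hw, fun i => ?_⟩
        by_cases hij : i.castSucc = p v
        · have hwm : w ∈ τ ∩ A i.castSucc :=
            Finset.mem_inter.2 ⟨hw, hij ▸ hwp⟩
          rw [Finset.card_erase_of_mem hwm, hij, hcj]
        · have hwnot : w ∉ τ ∩ A i.castSucc := by
            intro hmem
            have h1 := (hp w _).1 (Finset.mem_inter.1 hmem).2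
            have h2 := (hp w _).1 hwp
            exact hij (h1 ▸ h2 ▸ rfl)
          rw [Finset.erase_eq_of_notMem hwnot]
          exact hcother i hij
    rw [hSeq, hcj]
    exact ZMod.natCast_self 2

lemma supp_fA_sub (p : V → Fin (k + 1))
    (hp : ∀ v i, v ∈ A i ↔ p v = i) (X : Finset (Finset V)) (hk : 1 ≤ k) :
    ∀ σ, fA X k A σ ≠ 0 → σ ∈ FsetLow X k (Bp k A) := by
  intro σ hσ
  unfold fA at hσ
  by_cases hcond : σ ∈ X ∧ σ.card = k ∧ ∀ i : Fin k, (σ ∩ A i.castSucc).card = 1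
  swap
  · rw [if_neg hcond] at hσ; exact absurd rfl hσ
  obtain ⟨hσX, hσcard, hσtr⟩ := hcond
  have hlast : σ ∩ A (Fin.last k) = ∅ := by
    have := card_eq_sum_inter_parts p hp σ
    rw [hσcard, Fin.sum_univ_castSucc] at this
    have hsum1 : ∑ i : Fin k, (σ ∩ A i.castSucc).card = k := by
      rw [Finset.sum_congr rfl fun i _ => hσtr i]; simp
    rw [← Finset.card_eq_zero]
    omega
  rw [FsetLow, Finset.mem_filter, faces, Finset.mem_filter]
  refine ⟨⟨hσX, hσcard⟩, fun i => ?_⟩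
  unfold Bp
  split_ifs with h
  · rw [Finset.inter_union_distrib_left, hlast, Finset.union_empty]
    exact hσtr i
  · exact hσtr i

lemma suppDelta_fA_eq (p : V → Fin (k + 1))
    (hp : ∀ v i, v ∈ A i ↔ p v = i) (X Y : Finset (Finset V)) (hk : 1 ≤ k)
    (herase : ∀ τ ∈ Y, τ.card = k + 1 → ∀ v ∈ τ, τ.erase v ∈ X) :
    suppDelta Y k (fA X k A)
      = (faces Y (k + 1)).filter fun τ => ∀ i, (τ ∩ A i).card = 1 := by
  unfold suppDelta
  refine Finset.filter_congr fun τ hτ => ?_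
  rw [faces, Finset.mem_filter] at hτ
  exact deltaZ2_fA_ne_zero_iff p hp X hk τ hτ.2 (herase τ hτ.1 hτ.2)

end AuxProof

/-- For every `k`-dimensional simplicial complex `X` (`k ≥ 1`), `h'(X) ≤ h(X)`. -/
theorem cheeger'_le_cheeger
    {V : Type*} [DecidableEq V] [Fintype V] [LinearOrder V]
    (X : Finset (Finset V)) (k : ℕ) (hk : 1 ≤ k)
    (hX : IsComplex X) (hdim : IsDim X k) :
    cheeger' X k ≤ cheeger X k := by
  unfold cheeger cheeger'
  apply sInf_le_sInf
  rintro r ⟨A, hA, rfl⟩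
  choose p hp1 hp2 using hA.2
  have hp : ∀ v i, v ∈ A i ↔ p v = i := fun v i =>
    ⟨fun h => (hp2 v i h).symm, fun h => h ▸ hp1 v⟩
  have herX : ∀ τ ∈ X, τ.card = k + 1 → ∀ v ∈ τ, τ.erase v ∈ X :=
    fun τ hτ _ v _ => hX τ hτ _ (Finset.erase_subset v τ)
  have herK : ∀ τ ∈ completion X k, τ.card = k + 1 → ∀ v ∈ τ, τ.erase v ∈ X := by
    intro τ hτ hcard v hv
    rcases Finset.mem_union.1 hτ with h | h
    · exact hX τ h _ (Finset.erase_subset v τ)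
    · exact (Finset.mem_filter.1 h).2.2 v hv
  have h1 : suppDelta X k (fA X k A) = Fset X k A := by
    rw [suppDelta_fA_eq p hp X X hk herX]; rfl
  have h2 : suppDelta (completion X k) k (fA X k A) = Fpar X k A := by
    rw [suppDelta_fA_eq p hp X (completion X k) hk herK]; rfl
  refine ⟨Bp k A, fA X k A, Bp_partition hk A hA, supp_fA_sub p hp X hk, ?_⟩
  rw [h1, h2]
  rfl

end HigherCheeger
end

section
/- Let X be a k-dimensional simplicial complex on a finite vertex set V with complete (k−1)-skeleton, let V = A_0 ⊔ … ⊔ A_k be a partition into nonempty parts, and let f ∈ C^{k−1}(X;ℝ) be the associated cochain (with the partition-adapted linear order on V). Then ∂_{k−1}f = 0, i.e. f ∈ Z_{k−1}(X;ℝ), and ⟨f,f⟩ = |V|·|A_0|·|A_1|···|A_k| = |V|·|F^∂(A_0,…,A_k)|. -/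
open Finset

namespace HigherCheeger

variable {V : Type*} [DecidableEq V] [Fintype V] [LinearOrder V]

section Helpers

variable {k : ℕ} {A : Fin (k + 1) → Finset V}

lemma part_unique (hA : IsPartition A) {v : V} {i j : Fin (k + 1)}
    (hi : v ∈ A i) (hj : v ∈ A j) : i = j := by
  obtain ⟨i0, -, hu⟩ := hA.2 v
  rw [hu i hi, hu j hj]

lemma sum_card_inter (hA : IsPartition A) (σ : Finset V) :
    ∑ j, (σ ∩ A j).card = σ.card := by
  have h : ∀ j, (σ ∩ A j).card = ∑ v ∈ σ, if v ∈ A j then 1 else 0 := by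
    intro j
    rw [← Finset.filter_mem_eq_inter, Finset.card_filter]
  simp_rw [h]
  rw [Finset.sum_comm]
  have h2 : ∀ v ∈ σ, (∑ j : Fin (k + 1), if v ∈ A j then 1 else 0) = 1 := by
    intro v _
    obtain ⟨i0, hi0, hu⟩ := hA.2 v
    rw [Finset.sum_eq_single i0]
    · simp [hi0]
    · intro j _ hj
      have : v ∉ A j := fun hv => hj (hu j hv)
      simp [this]
    · simp
  rw [Finset.sum_congr rfl h2, Finset.sum_const, smul_eq_mul, mul_one]

lemma all_one {ι : Type*} {s : Finset ι} {g : ι → ℕ}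
    (h1 : ∀ i ∈ s, 1 ≤ g i) (h2 : ∑ i ∈ s, g i = s.card) :
    ∀ i ∈ s, g i = 1 := by
  by_contra h
  push_neg at h
  obtain ⟨i, hi, hne⟩ := h
  have hlt : Finset.card s < ∑ i ∈ s, g i := by
    calc Finset.card s = ∑ _i ∈ s, 1 := by simp
    _ < ∑ i ∈ s, g i :=
      Finset.sum_lt_sum h1 ⟨i, hi, lt_of_le_of_ne (h1 i hi) (Ne.symm hne)⟩
  omega

lemma card_transversal (hA : IsPartition A) (S : Finset (Fin (k + 1))) :
    (Finset.univ.filter fun τ : Finset V =>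
      ∀ i, (τ ∩ A i).card = if i ∈ S then 1 else 0).card
      = ∏ i ∈ S, (A i).card := by
  classical
  rw [← Finset.card_pi]
  have hne : ∀ τ : Finset V, τ ∈ (Finset.univ.filter fun τ : Finset V =>
      ∀ i, (τ ∩ A i).card = if i ∈ S then 1 else 0) → ∀ a ∈ S, (τ ∩ A a).Nonempty := by
    intro τ hτ a ha
    have h := (Finset.mem_filter.1 hτ).2 a
    rw [if_pos ha] at h
    exact Finset.card_pos.1 (by rw [h]; exact Nat.one_pos)
  apply Finset.card_bij' (i := fun τ hτ => fun a ha => (τ ∩ A a).min' (hne τ hτ a ha))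
    (j := fun f _ => S.attach.image fun a => f a.1 a.2)
  case hi =>
    intro τ hτ
    rw [Finset.mem_pi]
    intro a ha
    have := Finset.min'_mem _ (hne τ hτ a ha)
    exact (Finset.mem_inter.1 this).2
  case hj =>
    intro f hf
    rw [Finset.mem_pi] at hf
    rw [Finset.mem_filter]
    refine ⟨Finset.mem_univ _, ?_⟩
    intro i
    by_cases hi : i ∈ S
    · rw [if_pos hi]
      have : (S.attach.image fun a => f a.1 a.2) ∩ A i = {f i hi} := by
        ext w
        simp only [Finset.mem_inter, Finset.mem_image, Finset.mem_attach,
          true_and, Finset.mem_singleton]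
        constructor
        · rintro ⟨⟨b, rfl⟩, hwi⟩
          have hb : f b.1 b.2 ∈ A b.1 := hf b.1 b.2
          have : b.1 = i := part_unique hA hb hwi
          subst this
          rfl
        · rintro rfl
          exact ⟨⟨⟨i, hi⟩, rfl⟩, hf i hi⟩
      rw [this, Finset.card_singleton]
    · rw [if_neg hi]
      rw [Finset.card_eq_zero]
      ext w
      simp only [Finset.mem_inter, Finset.mem_image, Finset.mem_attach, true_and,
        Finset.notMem_empty, iff_false, not_and]
      rintro ⟨b, rfl⟩ hwi
      have hb : f b.1 b.2 ∈ A b.1 := hf b.1 b.2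
      exact hi (part_unique hA hb hwi ▸ b.2)
  case left_inv =>
    intro τ hτ
    ext v
    simp only [Finset.mem_image, Finset.mem_attach, true_and]
    constructor
    · rintro ⟨b, rfl⟩
      exact (Finset.mem_inter.1 (Finset.min'_mem _ (hne τ hτ b.1 b.2))).1
    · intro hv
      obtain ⟨i0, hi0, -⟩ := hA.2 v
      have hmem : v ∈ τ ∩ A i0 := Finset.mem_inter.2 ⟨hv, hi0⟩
      have hiS : i0 ∈ S := by
        by_contra hnS
        have h := (Finset.mem_filter.1 hτ).2 i0
        rw [if_neg hnS, Finset.card_eq_zero] at h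
        rw [h] at hmem
        exact absurd hmem (Finset.notMem_empty v)
      refine ⟨⟨i0, hiS⟩, ?_⟩
      have h := (Finset.mem_filter.1 hτ).2 i0
      rw [if_pos hiS] at h
      have h1 : (τ ∩ A i0).min' (hne τ hτ i0 hiS) ∈ τ ∩ A i0 := Finset.min'_mem _ _
      exact Finset.card_le_one.1 h.le _ h1 _ hmem
  case right_inv =>
    intro f hf
    rw [Finset.mem_pi] at hf
    funext a ha
    have : (S.attach.image fun a => f a.1 a.2) ∩ A a = {f a ha} := by
      ext w
      simp only [Finset.mem_inter, Finset.mem_image, Finset.mem_attach,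
        true_and, Finset.mem_singleton]
      constructor
      · rintro ⟨⟨b, rfl⟩, hwi⟩
        have hb : f b.1 b.2 ∈ A b.1 := hf b.1 b.2
        have : b.1 = a := part_unique hA hb hwi
        subst this
        rfl
      · rintro rfl
        exact ⟨⟨⟨a, ha⟩, rfl⟩, hf a ha⟩
    simp only [this, Finset.min'_singleton]

lemma sum_card_parts (hA : IsPartition A) : ∑ j, (A j).card = Fintype.card V := by
  have h := sum_card_inter hA Finset.univ
  simpa [Finset.univ_inter] using h

lemma faces_eq {X : Finset (Finset V)} (hskel : CompleteSkeleton X k) {c : ℕ} (hc : c ≤ k) :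
    faces X c = Finset.univ.filter fun σ : Finset V => σ.card = c := by
  ext σ
  simp only [faces, Finset.mem_filter, Finset.mem_univ, true_and]
  exact ⟨fun h => h.2, fun h => ⟨hskel σ (le_of_eq_of_le h hc), h⟩⟩

lemma incidence_insert {σ : Finset V} {v : V} (hv : v ∉ σ) :
    incidence (insert v σ) σ = (-1 : ℝ) ^ (σ.filter fun w => w < v).card := by
  rw [incidence, if_pos ⟨Finset.subset_insert _ _, (Finset.card_insert_of_notMem hv).symm⟩]
  have h1 : insert v σ \ σ = {v} := by
    ext w
    simp only [Finset.mem_sdiff, Finset.mem_insert, Finset.mem_singleton]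
    constructor
    · rintro ⟨h | h, hn⟩
      · exact h
      · exact absurd h hn
    · rintro rfl; exact ⟨Or.inl rfl, hv⟩
  rw [h1, Finset.sum_singleton]
  congr 1
  rw [Finset.filter_insert, if_neg (lt_irrefl v)]

lemma sq_eq (hA : IsPartition A) {τ : Finset V} (hτ : τ.card = k) :
    assocCochain A τ * assocCochain A τ
      = ∑ l : Fin (k + 1),
          if (∀ i, (τ ∩ A i).card = if i ∈ Finset.univ.erase l then 1 else 0)
          then ((A l).card : ℝ) * ((A l).card : ℝ) else 0 := by
  classical
  by_cases hE : (Finset.univ.filter fun l => τ ∩ A l = ∅).card = 1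
  · obtain ⟨l₀, hl₀⟩ := Finset.card_eq_one.1 hE
    have hEmem : ∀ j : Fin (k + 1), τ ∩ A j = ∅ ↔ j = l₀ := by
      intro j
      constructor
      · intro h
        have : j ∈ Finset.univ.filter fun l => τ ∩ A l = ∅ :=
          Finset.mem_filter.2 ⟨Finset.mem_univ _, h⟩
        rw [hl₀] at this; simpa using this
      · intro hj
        have hmem1 : j ∈ Finset.univ.filter fun l => τ ∩ A l = ∅ := by
          rw [hl₀, Finset.mem_singleton]; exact hj
        exact (Finset.mem_filter.1 hmem1).2
    have hone : ∀ j, j ≠ l₀ → (τ ∩ A j).card = 1 := by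
      have hs : ∑ i ∈ (Finset.univ : Finset (Fin (k + 1))).erase l₀, (τ ∩ A i).card = τ.card := by
        rw [Finset.sum_erase _ (by rw [(hEmem l₀).2 rfl]; exact Finset.card_empty)]
        exact sum_card_inter hA τ
      have hcards : ((Finset.univ : Finset (Fin (k + 1))).erase l₀).card = k := by
        rw [Finset.card_erase_of_mem (Finset.mem_univ _)]; simp
      intro j hj
      have h1 : ∀ i ∈ (Finset.univ : Finset (Fin (k + 1))).erase l₀, 1 ≤ (τ ∩ A i).card := by
        intro i hi
        have hine : τ ∩ A i ≠ ∅ := fun h => (Finset.mem_erase.1 hi).1 ((hEmem i).1 h)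
        exact Finset.card_pos.2 (Finset.nonempty_iff_ne_empty.2 hine)
      exact all_one h1 (by rw [hs, hτ, hcards]) j (Finset.mem_erase.2 ⟨hj, Finset.mem_univ _⟩)
    have hP : ∀ l : Fin (k + 1),
        (∀ i, (τ ∩ A i).card = if i ∈ Finset.univ.erase l then 1 else 0) ↔ l = l₀ := by
      intro l
      constructor
      · intro h
        have hl := h l
        rw [if_neg (fun hc => (Finset.mem_erase.1 hc).1 rfl), Finset.card_eq_zero] at hl
        exact (hEmem l).1 hl
      · intro hll
        rw [hll]
        intro i
        by_cases hi : i = l₀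
        · subst hi
          rw [if_neg (fun hc => (Finset.mem_erase.1 hc).1 rfl), Finset.card_eq_zero]
          exact (hEmem i).2 rfl
        · rw [if_pos (Finset.mem_erase.2 ⟨hi, Finset.mem_univ _⟩)]
          exact hone i hi
    rw [Finset.sum_eq_single l₀]
    · rw [if_pos ((hP l₀).2 rfl)]
      rw [assocCochain, if_pos hE, hl₀, Finset.sum_singleton]
      rw [mul_mul_mul_comm, ← pow_add, Even.neg_one_pow ⟨(l₀ : ℕ), rfl⟩, one_mul]
    · intro l _ hl
      rw [if_neg (fun hc => hl ((hP l).1 hc))]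
    · intro h; exact absurd (Finset.mem_univ l₀) h
  · rw [assocCochain, if_neg hE, mul_zero]
    symm
    apply Finset.sum_eq_zero
    intro l _
    rw [if_neg]
    intro h
    apply hE
    have : (Finset.univ.filter fun j => τ ∩ A j = ∅) = {l} := by
      ext j
      simp only [Finset.mem_filter, Finset.mem_univ, true_and, Finset.mem_singleton]
      constructor
      · intro hj
        by_contra hjl
        have := h j
        rw [if_pos (Finset.mem_erase.2 ⟨hjl, Finset.mem_univ _⟩)] at this
        rw [hj] at this
        simp at this
      · rintro rfl
        have := h j
        rw [if_neg (fun hc => (Finset.mem_erase.1 hc).1 rfl), Finset.card_eq_zero] at this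
        exact this
    rw [this, Finset.card_singleton]

lemma inn_eq {X : Finset (Finset V)} (hskel : CompleteSkeleton X k) (hA : IsPartition A) :
    inn X k (assocCochain A) (assocCochain A)
      = (Fintype.card V : ℝ) * ∏ i, ((A i).card : ℝ) := by
  classical
  rw [inn, faces_eq hskel le_rfl]
  rw [Finset.sum_congr rfl (fun τ hτ => sq_eq hA (Finset.mem_filter.1 hτ).2)]
  rw [Finset.sum_comm]
  have hterm : ∀ l : Fin (k + 1),
      (∑ τ ∈ Finset.univ.filter (fun τ : Finset V => τ.card = k),
        if (∀ i, (τ ∩ A i).card = if i ∈ Finset.univ.erase l then 1 else 0)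
        then ((A l).card : ℝ) * ((A l).card : ℝ) else 0)
      = ((A l).card : ℝ) * ∏ i, ((A i).card : ℝ) := by
    intro l
    rw [← Finset.sum_filter, Finset.sum_const]
    have hff : (Finset.univ.filter (fun τ : Finset V => τ.card = k)).filter
          (fun τ => ∀ i, (τ ∩ A i).card = if i ∈ Finset.univ.erase l then 1 else 0)
        = Finset.univ.filter (fun τ : Finset V =>
            ∀ i, (τ ∩ A i).card = if i ∈ Finset.univ.erase l then 1 else 0) := by
      ext τ
      simp only [Finset.mem_filter, Finset.mem_univ, true_and]
      constructor
      · exact fun h => h.2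
      · intro h
        refine ⟨?_, h⟩
        rw [← sum_card_inter hA τ]
        calc ∑ j, (τ ∩ A j).card
            = ∑ j : Fin (k + 1), if j ∈ Finset.univ.erase l then 1 else 0 :=
              Finset.sum_congr rfl (fun j _ => h j)
          _ = ((Finset.univ : Finset (Fin (k + 1))).erase l).card := by
              rw [Finset.sum_ite_mem, Finset.univ_inter, Finset.sum_const, smul_eq_mul, mul_one]
          _ = k := by rw [Finset.card_erase_of_mem (Finset.mem_univ _)]; simp
    rw [hff, card_transversal hA, nsmul_eq_mul, Nat.cast_prod,
      ← Finset.mul_prod_erase Finset.univ (fun i => ((A i).card : ℝ)) (Finset.mem_univ l)]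
    ring
  rw [Finset.sum_congr rfl (fun l _ => hterm l), ← Finset.sum_mul]
  congr 1
  rw [← Nat.cast_sum, sum_card_parts hA]

lemma Fpar_card {X : Finset (Finset V)} (hskel : CompleteSkeleton X k) (hA : IsPartition A) :
    (Fpar X k A).card = ∏ i, (A i).card := by
  classical
  have h1 : Fpar X k A = Finset.univ.filter (fun τ : Finset V =>
      ∀ i, (τ ∩ A i).card = if i ∈ (Finset.univ : Finset (Fin (k + 1))) then 1 else 0) := by
    ext τ
    simp only [Fpar, faces, Finset.mem_filter, Finset.mem_univ, true_and, if_true]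
    constructor
    · rintro ⟨-, h⟩; exact h
    · intro h
      have hcard : τ.card = k + 1 := by
        rw [← sum_card_inter hA τ, Finset.sum_congr rfl (fun j _ => h j)]
        simp
      refine ⟨⟨?_, hcard⟩, h⟩
      rw [completion, Finset.mem_union]
      right
      rw [Finset.mem_filter]
      refine ⟨Finset.mem_univ _, hcard, fun v hv => hskel _ ?_⟩
      rw [Finset.card_erase_of_mem hv, hcard]
      omega
  rw [h1, card_transversal hA]

lemma isCycle_assoc {X : Finset (Finset V)} (hskel : CompleteSkeleton X k)
    (hA : IsPartition A) (hord : OrderAdapted A) : IsCycle X k (assocCochain A) := by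
  classical
  intro σ
  show (∑ τ ∈ faces X k, incidence τ σ * assocCochain A τ) = 0
  rw [faces_eq hskel le_rfl]
  by_cases hcard : σ.card + 1 = k
  swap
  · apply Finset.sum_eq_zero
    intro τ hτ
    have hk : τ.card = k := (Finset.mem_filter.1 hτ).2
    rw [incidence, if_neg, zero_mul]
    rintro ⟨-, h2⟩
    exact hcard (by rw [h2, hk])
  have key : (∑ τ ∈ Finset.univ.filter (fun τ : Finset V => τ.card = k),
        incidence τ σ * assocCochain A τ)
      = ∑ v ∈ σᶜ, (-1 : ℝ) ^ (σ.filter fun w => w < v).card * assocCochain A (insert v σ) := by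
    rw [← Finset.sum_filter_of_ne (p := fun τ => σ ⊆ τ)
      (fun τ _ hne => by
        by_contra hsub
        apply hne
        rw [incidence, if_neg (fun hc => hsub hc.1), zero_mul])]
    symm
    apply Finset.sum_bij (i := fun (v : V) (_ : v ∈ σᶜ) => insert v σ)
    · intro v hv
      have hv' : v ∉ σ := Finset.mem_compl.1 hv
      simp only [Finset.mem_filter, Finset.mem_univ, true_and]
      exact ⟨by rw [Finset.card_insert_of_notMem hv', hcard], Finset.subset_insert _ _⟩
    · intro v1 h1 v2 h2 heq
      have h1' : v1 ∉ σ := Finset.mem_compl.1 h1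
      have : v1 ∈ insert v2 σ := heq ▸ Finset.mem_insert_self v1 σ
      rcases Finset.mem_insert.1 this with h | h
      · exact h
      · exact absurd h h1'
    · intro τ hτ
      simp only [Finset.mem_filter, Finset.mem_univ, true_and] at hτ
      obtain ⟨hk, hsub⟩ := hτ
      have hds : (τ \ σ).card = 1 := by
        rw [Finset.card_sdiff_of_subset hsub]; omega
      obtain ⟨x, hx⟩ := Finset.card_eq_one.1 hds
      have hxτ : x ∈ τ ∧ x ∉ σ := by
        have : x ∈ τ \ σ := by rw [hx]; exact Finset.mem_singleton_self _
        exact ⟨(Finset.mem_sdiff.1 this).1, (Finset.mem_sdiff.1 this).2⟩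
      refine ⟨x, Finset.mem_compl.2 hxτ.2, ?_⟩
      ext w
      simp only [Finset.mem_insert]
      constructor
      · rintro (rfl | hw)
        · exact hxτ.1
        · exact hsub hw
      · intro hw
        by_cases hwσ : w ∈ σ
        · exact Or.inr hwσ
        · left
          have : w ∈ τ \ σ := Finset.mem_sdiff.2 ⟨hw, hwσ⟩
          rw [hx] at this
          exact Finset.mem_singleton.1 this
    · intro v hv
      rw [incidence_insert (Finset.mem_compl.1 hv)]
  rw [key]
  set E := Finset.univ.filter (fun l : Fin (k + 1) => σ ∩ A l = ∅) with hEdef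
  have hEge2 : 2 ≤ E.card := by
    have hN : (Finset.univ.filter (fun l : Fin (k + 1) => ¬ σ ∩ A l = ∅)).card ≤ σ.card := by
      calc (Finset.univ.filter fun l : Fin (k + 1) => ¬ σ ∩ A l = ∅).card
          = ∑ _l ∈ Finset.univ.filter (fun l : Fin (k + 1) => ¬ σ ∩ A l = ∅), 1 := by
            rw [Finset.sum_const, smul_eq_mul, mul_one]
        _ ≤ ∑ l ∈ Finset.univ.filter (fun l : Fin (k + 1) => ¬ σ ∩ A l = ∅), (σ ∩ A l).card :=
            Finset.sum_le_sum (fun i hi => Finset.card_pos.2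
              (Finset.nonempty_iff_ne_empty.2 (Finset.mem_filter.1 hi).2))
        _ ≤ ∑ l, (σ ∩ A l).card :=
            Finset.sum_le_sum_of_subset (Finset.filter_subset _ _)
        _ = σ.card := sum_card_inter hA σ
    have hsum : E.card
        + (Finset.univ.filter (fun l : Fin (k + 1) => ¬ σ ∩ A l = ∅)).card = k + 1 := by
      rw [hEdef]
      have h := Finset.card_filter_add_card_filter_not
        (s := (Finset.univ : Finset (Fin (k + 1)))) (p := fun l => σ ∩ A l = ∅)
      simpa using h
    omega
  by_cases hE2 : E.card = 2
  swap
  · apply Finset.sum_eq_zero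
    intro v _
    obtain ⟨iv, hiv, -⟩ := hA.2 v
    have hsub : E.erase iv ⊆ Finset.univ.filter (fun l => insert v σ ∩ A l = ∅) := by
      intro l hl
      obtain ⟨hlne, hlE⟩ := Finset.mem_erase.1 hl
      rw [hEdef, Finset.mem_filter] at hlE
      rw [Finset.mem_filter]
      refine ⟨Finset.mem_univ _, ?_⟩
      ext w
      simp only [Finset.mem_inter, Finset.mem_insert, Finset.notMem_empty, iff_false, not_and]
      rintro (rfl | hw) hwl
      · exact hlne (part_unique hA hwl hiv)
      · have hmem : w ∈ σ ∩ A l := Finset.mem_inter.2 ⟨hw, hwl⟩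
        rw [hlE.2] at hmem
        exact absurd hmem (Finset.notMem_empty w)
    have h2 : 2 ≤ (Finset.univ.filter (fun l => insert v σ ∩ A l = ∅)).card := by
      have hc1 := Finset.card_le_card hsub
      have hc2 := Finset.pred_card_le_card_erase (s := E) (a := iv)
      omega
    have hzero : assocCochain A (insert v σ) = 0 := by
      rw [assocCochain, if_neg (by omega)]
    rw [hzero, mul_zero]
  obtain ⟨a, b, hab, hEab⟩ := Finset.card_eq_two.1 hE2
  obtain ⟨l, m, hlm, hElm⟩ : ∃ l m : Fin (k + 1), l < m ∧ E = {l, m} := by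
    rcases lt_or_gt_of_ne hab with h | h
    · exact ⟨a, b, h, hEab⟩
    · exact ⟨b, a, h, by rw [hEab, Finset.pair_comm]⟩
  have hmem : ∀ j : Fin (k + 1), σ ∩ A j = ∅ ↔ (j = l ∨ j = m) := by
    intro j
    constructor
    · intro h
      have : j ∈ E := by rw [hEdef]; exact Finset.mem_filter.2 ⟨Finset.mem_univ _, h⟩
      rw [hElm] at this; simpa using this
    · intro h
      have : j ∈ E := by rw [hElm]; simpa using h
      rw [hEdef, Finset.mem_filter] at this; exact this.2
  have hl0 : σ ∩ A l = ∅ := (hmem l).2 (Or.inl rfl)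
  have hm0 : σ ∩ A m = ∅ := (hmem m).2 (Or.inr rfl)
  have hone : ∀ j, j ≠ l → j ≠ m → (σ ∩ A j).card = 1 := by
    have hsm : m ∈ (Finset.univ : Finset (Fin (k + 1))).erase l :=
      Finset.mem_erase.2 ⟨hlm.ne', Finset.mem_univ _⟩
    have hs : ∑ i ∈ ((Finset.univ : Finset (Fin (k + 1))).erase l).erase m,
        (σ ∩ A i).card = σ.card := by
      rw [Finset.sum_erase _ (by rw [hm0]; exact Finset.card_empty),
        Finset.sum_erase _ (by rw [hl0]; exact Finset.card_empty)]
      exact sum_card_inter hA σ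
    have hcards : (((Finset.univ : Finset (Fin (k + 1))).erase l).erase m).card = k - 1 := by
      rw [Finset.card_erase_of_mem hsm, Finset.card_erase_of_mem (Finset.mem_univ _)]
      simp
    intro j hjl hjm
    have h1 : ∀ i ∈ ((Finset.univ : Finset (Fin (k + 1))).erase l).erase m,
        1 ≤ (σ ∩ A i).card := by
      intro i hi
      obtain ⟨him, h2⟩ := Finset.mem_erase.1 hi
      obtain ⟨hil, -⟩ := Finset.mem_erase.1 h2
      have hne : σ ∩ A i ≠ ∅ := fun h => by
        rcases (hmem i).1 h with rfl | rfl
        · exact hil rfl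
        · exact him rfl
      exact Finset.card_pos.2 (Finset.nonempty_iff_ne_empty.2 hne)
    exact all_one h1 (by rw [hs, hcards]; omega) j
      (Finset.mem_erase.2 ⟨hjm, Finset.mem_erase.2 ⟨hjl, Finset.mem_univ _⟩⟩)
  have hklt : (l : ℕ) < (m : ℕ) := hlm
  -- position of v ∈ A l
  have hposL : ∀ v ∈ A l, (σ.filter fun w => w < v).card = (l : ℕ) := by
    intro v hv
    have hj : ∀ j : Fin (k + 1),
        ((σ.filter fun w => w < v) ∩ A j).card = if j < l then 1 else 0 := by
      intro j
      by_cases hjl : j < l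
      · rw [if_pos hjl]
        have heq : (σ.filter fun w => w < v) ∩ A j = σ ∩ A j := by
          ext w
          simp only [Finset.mem_inter, Finset.mem_filter]
          constructor
          · rintro ⟨⟨h1, -⟩, h2⟩; exact ⟨h1, h2⟩
          · rintro ⟨h1, h2⟩; exact ⟨⟨h1, hord j l hjl w h2 v hv⟩, h2⟩
        rw [heq]
        exact hone j (ne_of_lt hjl) (ne_of_lt (hjl.trans hlm))
      · rw [if_neg hjl, Finset.card_eq_zero]
        ext w
        simp only [Finset.mem_inter, Finset.mem_filter, Finset.notMem_empty, iff_false, not_and]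
        rintro ⟨hwσ, hwv⟩ hwj
        rcases lt_or_eq_of_le (not_lt.1 hjl) with h | h
        · exact absurd (hord l j h v hv w hwj) (not_lt.2 hwv.le)
        · have : w ∈ σ ∩ A j := Finset.mem_inter.2 ⟨hwσ, hwj⟩
          rw [← h, hl0] at this
          exact absurd this (Finset.notMem_empty w)
    rw [← sum_card_inter hA (σ.filter fun w => w < v),
      Finset.sum_congr rfl (fun j _ => hj j), ← Finset.card_filter]
    have : Finset.univ.filter (fun j : Fin (k + 1) => j < l) = Finset.Iio l := by
      ext j; simp
    rw [this, Fin.card_Iio]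
  -- position of v ∈ A m
  have hposM : ∀ v ∈ A m, (σ.filter fun w => w < v).card = (m : ℕ) - 1 := by
    intro v hv
    have hj : ∀ j : Fin (k + 1),
        ((σ.filter fun w => w < v) ∩ A j).card = if j < m ∧ j ≠ l then 1 else 0 := by
      intro j
      by_cases hjm : j < m ∧ j ≠ l
      · rw [if_pos hjm]
        have heq : (σ.filter fun w => w < v) ∩ A j = σ ∩ A j := by
          ext w
          simp only [Finset.mem_inter, Finset.mem_filter]
          constructor
          · rintro ⟨⟨h1, -⟩, h2⟩; exact ⟨h1, h2⟩
          · rintro ⟨h1, h2⟩; exact ⟨⟨h1, hord j m hjm.1 w h2 v hv⟩, h2⟩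
        rw [heq]
        exact hone j hjm.2 (ne_of_lt hjm.1)
      · rw [if_neg hjm, Finset.card_eq_zero]
        ext w
        simp only [Finset.mem_inter, Finset.mem_filter, Finset.notMem_empty, iff_false, not_and]
        rintro ⟨hwσ, hwv⟩ hwj
        by_cases hjl : j = l
        · subst hjl
          have : w ∈ σ ∩ A j := Finset.mem_inter.2 ⟨hwσ, hwj⟩
          rw [hl0] at this
          exact absurd this (Finset.notMem_empty w)
        · have hjm' : ¬ j < m := fun h => hjm ⟨h, hjl⟩
          rcases lt_or_eq_of_le (not_lt.1 hjm') with h | h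
          · exact absurd (hord m j h v hv w hwj) (not_lt.2 hwv.le)
          · have : w ∈ σ ∩ A j := Finset.mem_inter.2 ⟨hwσ, hwj⟩
            rw [← h, hm0] at this
            exact absurd this (Finset.notMem_empty w)
    rw [← sum_card_inter hA (σ.filter fun w => w < v),
      Finset.sum_congr rfl (fun j _ => hj j), ← Finset.card_filter]
    have heq : Finset.univ.filter (fun j : Fin (k + 1) => j < m ∧ j ≠ l)
        = (Finset.Iio m).erase l := by
      ext j
      simp only [Finset.mem_filter, Finset.mem_univ, true_and, Finset.mem_erase, Finset.mem_Iio]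
      tauto
    rw [heq, Finset.card_erase_of_mem (Finset.mem_Iio.2 hlm), Fin.card_Iio]
  -- value of f on insert v σ, v ∈ A l
  have hfL : ∀ v ∈ A l, assocCochain A (insert v σ) = (-1 : ℝ) ^ (m : ℕ) * ((A m).card : ℝ) := by
    intro v hv
    have hE' : (Finset.univ.filter fun j => insert v σ ∩ A j = ∅) = {m} := by
      ext j
      simp only [Finset.mem_filter, Finset.mem_univ, true_and, Finset.mem_singleton]
      constructor
      · intro h
        have hj : σ ∩ A j = ∅ := Finset.subset_empty.1
          (h ▸ Finset.inter_subset_inter (Finset.subset_insert v σ) Finset.Subset.rfl)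
        rcases (hmem j).1 hj with hjl | hjm
        · exfalso
          have hvj : v ∈ insert v σ ∩ A j := Finset.mem_inter.2
            ⟨Finset.mem_insert_self _ _, by rw [hjl]; exact hv⟩
          rw [h] at hvj
          exact absurd hvj (Finset.notMem_empty v)
        · exact hjm
      · intro hjm
        rw [hjm]
        ext w
        simp only [Finset.mem_inter, Finset.mem_insert, Finset.notMem_empty, iff_false, not_and]
        rintro (rfl | hw) hwm
        · exact absurd (part_unique hA hv hwm) hlm.ne
        · have : w ∈ σ ∩ A m := Finset.mem_inter.2 ⟨hw, hwm⟩
          rw [hm0] at this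
          exact absurd this (Finset.notMem_empty w)
    rw [assocCochain, hE', if_pos (Finset.card_singleton m), Finset.sum_singleton]
  -- value of f on insert v σ, v ∈ A m
  have hfM : ∀ v ∈ A m, assocCochain A (insert v σ) = (-1 : ℝ) ^ (l : ℕ) * ((A l).card : ℝ) := by
    intro v hv
    have hE' : (Finset.univ.filter fun j => insert v σ ∩ A j = ∅) = {l} := by
      ext j
      simp only [Finset.mem_filter, Finset.mem_univ, true_and, Finset.mem_singleton]
      constructor
      · intro h
        have hj : σ ∩ A j = ∅ := Finset.subset_empty.1
          (h ▸ Finset.inter_subset_inter (Finset.subset_insert v σ) Finset.Subset.rfl)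
        rcases (hmem j).1 hj with hjl | hjm
        · exact hjl
        · exfalso
          have hvj : v ∈ insert v σ ∩ A j := Finset.mem_inter.2
            ⟨Finset.mem_insert_self _ _, by rw [hjm]; exact hv⟩
          rw [h] at hvj
          exact absurd hvj (Finset.notMem_empty v)
      · intro hjl
        rw [hjl]
        ext w
        simp only [Finset.mem_inter, Finset.mem_insert, Finset.notMem_empty, iff_false, not_and]
        rintro (rfl | hw) hwl
        · exact absurd (part_unique hA hwl hv) hlm.ne
        · have : w ∈ σ ∩ A l := Finset.mem_inter.2 ⟨hw, hwl⟩
          rw [hl0] at this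
          exact absurd this (Finset.notMem_empty w)
    rw [assocCochain, hE', if_pos (Finset.card_singleton l), Finset.sum_singleton]
  -- restrict the sum to A l ∪ A m
  have hsub : A l ∪ A m ⊆ σᶜ := by
    intro v hv
    rw [Finset.mem_compl]
    intro hvσ
    rcases Finset.mem_union.1 hv with h | h
    · have : v ∈ σ ∩ A l := Finset.mem_inter.2 ⟨hvσ, h⟩
      rw [hl0] at this; exact absurd this (Finset.notMem_empty v)
    · have : v ∈ σ ∩ A m := Finset.mem_inter.2 ⟨hvσ, h⟩
      rw [hm0] at this; exact absurd this (Finset.notMem_empty v)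
  have hzero : ∀ v ∈ σᶜ, v ∉ A l ∪ A m →
      (-1 : ℝ) ^ (σ.filter fun w => w < v).card * assocCochain A (insert v σ) = 0 := by
    intro v _ hvnot
    have hvl : v ∉ A l := fun h => hvnot (Finset.mem_union_left _ h)
    have hvm : v ∉ A m := fun h => hvnot (Finset.mem_union_right _ h)
    have hpair : ({l, m} : Finset (Fin (k + 1))) ⊆
        Finset.univ.filter (fun j => insert v σ ∩ A j = ∅) := by
      intro j hj
      rw [Finset.mem_filter]
      refine ⟨Finset.mem_univ _, ?_⟩
      rcases Finset.mem_insert.1 hj with rfl | hj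
      · ext w
        simp only [Finset.mem_inter, Finset.mem_insert, Finset.notMem_empty, iff_false, not_and]
        rintro (rfl | hw) hwj
        · exact hvl hwj
        · have : w ∈ σ ∩ A j := Finset.mem_inter.2 ⟨hw, hwj⟩
          rw [hl0] at this; exact absurd this (Finset.notMem_empty w)
      · rw [Finset.mem_singleton.1 hj]
        ext w
        simp only [Finset.mem_inter, Finset.mem_insert, Finset.notMem_empty, iff_false, not_and]
        rintro (rfl | hw) hwm
        · exact hvm hwm
        · have : w ∈ σ ∩ A m := Finset.mem_inter.2 ⟨hw, hwm⟩
          rw [hm0] at this; exact absurd this (Finset.notMem_empty w)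
    have h2 : 2 ≤ (Finset.univ.filter (fun j => insert v σ ∩ A j = ∅)).card := by
      have := Finset.card_le_card hpair
      rwa [Finset.card_pair hlm.ne] at this
    rw [assocCochain, if_neg (by omega), mul_zero]
  rw [← Finset.sum_subset hsub hzero]
  have hdisj : Disjoint (A l) (A m) :=
    Finset.disjoint_left.2 fun v h1 h2 => hlm.ne (part_unique hA h1 h2)
  rw [Finset.sum_union hdisj]
  have hsl : ∑ v ∈ A l, (-1 : ℝ) ^ (σ.filter fun w => w < v).card * assocCochain A (insert v σ)
      = ((A l).card : ℝ) * ((-1 : ℝ) ^ (l : ℕ) * ((-1 : ℝ) ^ (m : ℕ) * ((A m).card : ℝ))) := by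
    rw [Finset.sum_congr rfl (fun v hv => by rw [hposL v hv, hfL v hv])]
    rw [Finset.sum_const, nsmul_eq_mul]
  have hsm : ∑ v ∈ A m, (-1 : ℝ) ^ (σ.filter fun w => w < v).card * assocCochain A (insert v σ)
      = ((A m).card : ℝ) * ((-1 : ℝ) ^ ((m : ℕ) - 1) * ((-1 : ℝ) ^ (l : ℕ) * ((A l).card : ℝ))) := by
    rw [Finset.sum_congr rfl (fun v hv => by rw [hposM v hv, hfM v hv])]
    rw [Finset.sum_const, nsmul_eq_mul]
  rw [hsl, hsm]
  obtain ⟨n, hn⟩ : ∃ n, (m : ℕ) = n + 1 := ⟨(m : ℕ) - 1, by omega⟩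
  rw [hn]
  simp only [Nat.add_sub_cancel, pow_succ]
  ring

end Helpers

/-- **Lemma 1.5 (Parzanchevski et al.).**  Let `X` be a `k`-dimensional complex with
complete `(k-1)`-skeleton, `A` a partition of `V` into `k+1` nonempty parts and `f` the
associated cochain (w.r.t. a partition-adapted order).  Then `f ∈ Z_{k-1}(X;ℝ)` and
`⟨f,f⟩ = |V|·|A_0|·…·|A_k| = |V|·|F^∂(A_0,…,A_k)|`. -/
theorem assocCochain_isCycle_and_norm
    {V : Type*} [DecidableEq V] [Fintype V] [LinearOrder V]
    (X : Finset (Finset V)) (k : ℕ)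
    (hX : IsComplex X) (hdim : IsDim X k) (hskel : CompleteSkeleton X k)
    (A : Fin (k + 1) → Finset V) (hA : IsPartition A) (hord : OrderAdapted A) :
    IsCycle X k (assocCochain A) ∧
      inn X k (assocCochain A) (assocCochain A)
        = (Fintype.card V : ℝ) * ∏ i, ((A i).card : ℝ) ∧
      inn X k (assocCochain A) (assocCochain A)
        = (Fintype.card V : ℝ) * ((Fpar X k A).card : ℝ) := by
  refine ⟨isCycle_assoc hskel hA hord, inn_eq hskel hA, ?_⟩
  rw [inn_eq hskel hA, Fpar_card hskel hA, Nat.cast_prod]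

end HigherCheeger
end

section
/- Let X be a k-dimensional simplicial complex on a finite vertex set V, let V = A_0 ⊔ … ⊔ A_k be a partition into nonempty parts, and let f ∈ C^{k−1}(X;ℝ) be the associated cochain (with the partition-adapted linear order on V). For τ ∈ F^∂(A_0,…,A_k) and g ∈ C^{k−2}(X;ℝ), define q(τ,g) = Σ over k-element subsets σ of τ (all of which lie in X_{k−1}, and satisfy d(σ) ≥ 1) of (1/d(σ))·(f(σ) − (δ_{k−2}g)(σ))². Then for every g ∈ C^{k−2}(X;ℝ): ‖f − δ_{k−2}g‖² ≥ Σ_{τ ∈ F^∂(A_0,…,A_k)} q(τ,g). -/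
open Finset

namespace HigherCheeger

variable {V : Type*} [DecidableEq V] [Fintype V] [LinearOrder V]

/-- **Lemma 2.2 a).**  Let `X` be a `k`-dimensional complex, `A` a partition of `V` into
`k+1` nonempty parts and `f` the associated cochain (w.r.t. a partition-adapted order).
For `τ ∈ F^∂(A_0,…,A_k)` and `g ∈ C^{k-2}(X;ℝ)` let
`q(τ,g) = ∑_{σ ⊂ τ, |σ| = k} (1/d(σ))·(f(σ) - (δ_{k-2}g)(σ))²`.  Then
`‖f - δ_{k-2}g‖² ≥ ∑_{τ ∈ F^∂} q(τ,g)`. -/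
theorem norm_sub_delta_ge_sum_q
    {V : Type*} [DecidableEq V] [Fintype V] [LinearOrder V]
    (X : Finset (Finset V)) (k : ℕ)
    (hX : IsComplex X) (hdim : IsDim X k)
    (A : Fin (k + 1) → Finset V) (hA : IsPartition A) (hord : OrderAdapted A)
    (g : Finset V → ℝ) :
    ∑ τ ∈ Fpar X k A, ∑ v ∈ τ,
        (1 / (degPar X k A (τ.erase v) : ℝ)) *
          (assocCochain A (τ.erase v) - delta X (k - 1) g (τ.erase v)) ^ 2
      ≤ inn X k (fun σ => assocCochain A σ - delta X (k - 1) g σ)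
            (fun σ => assocCochain A σ - delta X (k - 1) g σ) := by
  classical
  set h : Finset V → ℝ := fun σ => assocCochain A σ - delta X (k - 1) g σ with hh
  set F : Finset V → ℝ := fun σ => (1 / (degPar X k A σ : ℝ)) * h σ ^ 2 with hF
  have key : ∀ τ ∈ Fpar X k A,
      (∑ v ∈ τ, F (τ.erase v)) = ∑ σ ∈ (faces X k).filter (· ⊆ τ), F σ := by
    intro τ hτ
    have hτc : τ.card = k + 1 := (Finset.mem_filter.mp (Finset.mem_filter.mp hτ).1).2
    have herase : ∀ v ∈ τ, τ.erase v ∈ X := by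
      have hc : τ ∈ completion X k := (Finset.mem_filter.mp (Finset.mem_filter.mp hτ).1).1
      rcases Finset.mem_union.mp hc with h1 | h2
      · intro v _; exact hX τ h1 _ (Finset.erase_subset _ _)
      · exact (Finset.mem_filter.mp h2).2.2
    refine Finset.sum_bij (fun v (hv : v ∈ τ) => τ.erase v) ?_ ?_ ?_ ?_
    · intro v hv
      refine Finset.mem_filter.mpr ⟨Finset.mem_filter.mpr ⟨herase v hv, ?_⟩,
        Finset.erase_subset _ _⟩
      rw [Finset.card_erase_of_mem hv, hτc]
      omega
    · intro a ha b hb hab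
      exact (Finset.erase_inj τ ha).mp hab
    · intro σ hσ
      obtain ⟨hσX, hσsub⟩ := Finset.mem_filter.mp hσ
      have hσc : σ.card = k := (Finset.mem_filter.mp hσX).2
      have hcard : (τ \ σ).card = 1 := by
        rw [Finset.card_sdiff_of_subset hσsub, hτc, hσc]
        omega
      obtain ⟨v, hv⟩ := Finset.card_eq_one.mp hcard
      have hvτ : v ∈ τ := (Finset.mem_sdiff.mp (hv ▸ Finset.mem_singleton_self v)).1
      have hvσ : v ∉ σ := (Finset.mem_sdiff.mp (hv ▸ Finset.mem_singleton_self v)).2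
      refine ⟨v, hvτ, ?_⟩
      have hsub : σ ⊆ τ.erase v := fun x hx =>
        Finset.mem_erase.mpr ⟨fun hxv => hvσ (hxv ▸ hx), hσsub hx⟩
      have : (τ.erase v).card ≤ σ.card := by
        rw [Finset.card_erase_of_mem hvτ, hτc, hσc]
        omega
      exact (Finset.eq_of_subset_of_card_le hsub this).symm
    · intro v hv; rfl
  calc ∑ τ ∈ Fpar X k A, ∑ v ∈ τ, F (τ.erase v)
      = ∑ τ ∈ Fpar X k A, ∑ σ ∈ (faces X k).filter (· ⊆ τ), F σ :=
        Finset.sum_congr rfl key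
    _ = ∑ τ ∈ Fpar X k A, ∑ σ ∈ faces X k, if σ ⊆ τ then F σ else 0 := by
        simp [Finset.sum_filter]
    _ = ∑ σ ∈ faces X k, ∑ τ ∈ Fpar X k A, if σ ⊆ τ then F σ else 0 :=
        Finset.sum_comm
    _ = ∑ σ ∈ faces X k, (degPar X k A σ : ℝ) * F σ := by
        refine Finset.sum_congr rfl fun σ _ => ?_
        rw [← Finset.sum_filter, Finset.sum_const, nsmul_eq_mul]
        rfl
    _ ≤ ∑ σ ∈ faces X k, h σ * h σ := by
        refine Finset.sum_le_sum fun σ _ => ?_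
        rcases eq_or_ne (degPar X k A σ) 0 with hd | hd
        · simp [hF, hd, mul_self_nonneg]
        · have : (degPar X k A σ : ℝ) ≠ 0 := Nat.cast_ne_zero.mpr hd
          rw [hF]
          field_simp
          rw [sq]
        

end HigherCheeger
end
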